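/- Let q be a prime power and F_q the finite field with q elements. Let R be a commutative ring containing F_q (an F_q-algebra), W ⊆ R an F_q-subspace of finite dimension d, and f ∈ R with f ∉ W. If k is a nonnegative integer such that d(q−1) > l_q(k) (i.e. d > l_q(k)/(q−1)), then ∑_{w ∈ W} (f + w)^k = 0 in R. -/

import Mathlib

/-- `lq q k` is the sum of the base-`q` digits of `k`. -/
def lq (q k : ℕ) : ℕ := (Nat.digits q k).sum

open Finset

section Helpers

variable {F : Type*} [Field F] [Fintype F]

lemma helper_sum_pow (n : ℕ) (h : n = 0 ∨ ¬ (Fintype.card F - 1) ∣ n) :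
    ∑ x : F, x ^ n = 0 := by
  classical
  rcases h with rfl | h
  · simp only [pow_zero, Finset.sum_const, Finset.card_univ, nsmul_eq_mul, mul_one]
    exact FiniteField.cast_card_eq_zero F
  · have hn : n ≠ 0 := by rintro rfl; exact h (dvd_zero _)
    let φ : Fˣ ↪ F := ⟨fun x ↦ x, Units.val_injective⟩
    have emb : (Finset.univ.map φ) = Finset.univ \ {0} := by
      ext x
      simpa only [mem_map, mem_univ, Function.Embedding.coeFn_mk, true_and, mem_sdiff,
        mem_singleton, φ, IsUnit, ne_eq] using isUnit_iff_ne_zero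
    calc ∑ x : F, x ^ n = ∑ x ∈ univ \ {(0 : F)}, x ^ n := by
          rw [← Finset.sum_sdiff (Finset.subset_univ {(0 : F)}), Finset.sum_singleton,
            zero_pow hn, add_zero]
      _ = ∑ x : Fˣ, (x : F) ^ n := by rw [← emb, Finset.sum_map]; rfl
      _ = 0 := by rw [FiniteField.sum_pow_units F n, if_neg h]

lemma helper_A0 {d : ℕ} {m : Type*} [Fintype m] (g : m → Fin d)
    (h : Fintype.card m < d * (Fintype.card F - 1)) :
    ∑ c : Fin d → F, ∏ t, c (g t) = 0 := by
  classical
  set n : Fin d → ℕ := fun a => (univ.filter fun t => g t = a).card with hn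
  have hprod : ∀ c : Fin d → F, ∏ t, c (g t) = ∏ a, (c a) ^ n a := by
    intro c
    rw [← Finset.prod_fiberwise univ g (fun t => c (g t))]
    refine Finset.prod_congr rfl fun a _ => ?_
    rw [Finset.prod_congr rfl (fun t ht => ?_), Finset.prod_const]
    rw [(Finset.mem_filter.1 ht).2]
  simp_rw [hprod]
  rw [← Fintype.prod_sum (fun a (x : F) => x ^ n a)]
  have hsum : ∑ a, n a = Fintype.card m := by
    rw [Fintype.card, Finset.card_eq_sum_ones,
      ← Finset.sum_fiberwise (univ : Finset m) g (fun _ => (1 : ℕ))]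
    exact Finset.sum_congr rfl fun a _ => Finset.card_eq_sum_ones _
  have : ∃ a, n a = 0 ∨ ¬ (Fintype.card F - 1) ∣ n a := by
    by_contra hc
    push_neg at hc
    have hle : ∀ a, Fintype.card F - 1 ≤ n a := fun a =>
      Nat.le_of_dvd (Nat.pos_of_ne_zero (hc a).1) (hc a).2
    have : d * (Fintype.card F - 1) ≤ Fintype.card m := by
      rw [← hsum]
      calc d * (Fintype.card F - 1) = ∑ _a : Fin d, (Fintype.card F - 1) := by
            simp [Finset.sum_const, Finset.card_univ, mul_comm]
        _ ≤ ∑ a, n a := Finset.sum_le_sum fun a _ => hle a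
    omega
  obtain ⟨a, ha⟩ := this
  exact Finset.prod_eq_zero (Finset.mem_univ a) (helper_sum_pow _ ha)

variable {R : Type*} [CommRing R] [Algebra F R]

lemma helper_A {ι : Type*} (d : ℕ) (T : Finset ι) (hT : T.card < d * (Fintype.card F - 1))
    (v : ι → Fin d → R) :
    ∑ c : Fin d → F, ∏ t ∈ T, (∑ a, algebraMap F R (c a) * v t a) = 0 := by
  classical
  have key : ∀ c : Fin d → F, ∏ t ∈ T, (∑ a, algebraMap F R (c a) * v t a)
      = ∑ p : {x // x ∈ T} → Fin d,
          algebraMap F R (∏ t, c (p t)) * ∏ t : {x // x ∈ T}, v t (p t) := by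
    intro c
    rw [← Finset.prod_attach T, ← Finset.univ_eq_attach,
      Fintype.prod_sum (fun (t : {x // x ∈ T}) (a : Fin d) => algebraMap F R (c a) * v t a)]
    refine Finset.sum_congr rfl fun p _ => ?_
    rw [Finset.prod_mul_distrib, map_prod]
  simp_rw [key]
  rw [Finset.sum_comm]
  refine Finset.sum_eq_zero fun p _ => ?_
  rw [← Finset.sum_mul, ← map_sum, helper_A0 p (by rwa [Fintype.card_coe]), map_zero, zero_mul]

lemma helper_B {ι : Type*} [DecidableEq ι] (d : ℕ) (S : Finset ι)
    (hS : S.card < d * (Fintype.card F - 1)) (g : ι → R) (v : ι → Fin d → R) :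
    ∑ c : Fin d → F, ∏ t ∈ S, (g t + ∑ a, algebraMap F R (c a) * v t a) = 0 := by
  classical
  have key : ∀ c : Fin d → F, ∏ t ∈ S, (g t + ∑ a, algebraMap F R (c a) * v t a)
      = ∑ T ∈ S.powerset,
          (∏ t ∈ T, (∑ a, algebraMap F R (c a) * v t a)) * ∏ t ∈ S \ T, g t := by
    intro c
    calc ∏ t ∈ S, (g t + ∑ a, algebraMap F R (c a) * v t a)
        = ∏ t ∈ S, ((∑ a, algebraMap F R (c a) * v t a) + g t) :=
          Finset.prod_congr rfl fun t _ => add_comm _ _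
      _ = _ := Finset.prod_add _ _ _
  simp_rw [key]
  rw [Finset.sum_comm]
  refine Finset.sum_eq_zero fun T hT => ?_
  rw [← Finset.sum_mul,
    helper_A d T (lt_of_le_of_lt (Finset.card_le_card (Finset.mem_powerset.1 hT)) hS) v,
    zero_mul]

lemma pow_ofDigits_helper {M : Type*} [CommMonoid M] (q : ℕ) (x : M) :
    ∀ L : List ℕ, x ^ Nat.ofDigits q L
      = ∏ i ∈ Finset.range L.length, (x ^ q ^ i) ^ L.getD i 0
  | [] => by simp [Nat.ofDigits_nil]
  | a :: L => by
    rw [Nat.ofDigits_cons, List.length_cons, Finset.prod_range_succ']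
    simp only [List.getD_cons_succ, List.getD_cons_zero, pow_zero, pow_one]
    rw [pow_add, pow_mul, pow_ofDigits_helper q (x ^ q) L, mul_comm]
    congr 1
    refine Finset.prod_congr rfl fun i _ => ?_
    congr 1
    rw [← pow_mul, ← pow_succ']

lemma sum_getD_helper : ∀ L : List ℕ, ∑ i ∈ Finset.range L.length, L.getD i 0 = L.sum
  | [] => rfl
  | a :: L => by
    rw [List.length_cons, Finset.sum_range_succ', List.sum_cons]
    simp only [List.getD_cons_succ, List.getD_cons_zero]
    rw [sum_getD_helper L, add_comm]

end Helpers

/-- Let `q` be a prime power and `F = F_q` the finite field with `q` elements.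
Let `R` be a commutative ring containing `F_q`, `W ⊆ R` an `F_q`-subspace of finite dimension
`d`, and `f ∈ R` with `f ∉ W`. If `k` is a nonnegative integer with `d(q−1) > l_q(k)`, then
`∑_{w ∈ W} (f + w)^k = 0` in `R`. -/
theorem statement0 (F : Type*) [Field F] [Fintype F] (q : ℕ) (hq : q = Fintype.card F)
    (R : Type*) [CommRing R] [Algebra F R]
    (hcont : Function.Injective (algebraMap F R))
    (W : Submodule F R) [Module.Finite F W] (d : ℕ) (hd : Module.finrank F W = d)
    (f : R) (hf : f ∉ W) (k : ℕ) (hk : lq q k < d * (q - 1)) :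
    ∑ᶠ w ∈ (W : Set R), (f + w) ^ k = 0 := by
  classical
  subst hq
  set q := Fintype.card F with hq
  -- characteristic
  haveI : CharP F (ringChar F) := ringChar.charP F
  obtain ⟨s, hps, hcard⟩ := FiniteField.card F (ringChar F)
  haveI : Fact (ringChar F).Prime := ⟨hps⟩
  haveI : CharP R (ringChar F) := charP_of_injective_algebraMap hcont (ringChar F)
  -- basis
  let e : Module.Basis (Fin d) F W := Module.finBasisOfFinrankEq F W hd
  letI : Fintype W := Fintype.ofEquiv _ e.equivFun.toEquiv.symm
  have hWfin : (W : Set R).Finite := Set.toFinite _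
  rw [finsum_mem_eq_finite_toFinset_sum _ hWfin,
    Finset.sum_subtype (p := (· ∈ W)) hWfin.toFinset
      (fun x => by simp [Set.Finite.mem_toFinset]) (fun w => (f + w) ^ k),
    ← Equiv.sum_comp e.equivFun.toEquiv.symm (fun w : W => (f + (w : R)) ^ k)]
  have hcoe : ∀ c : Fin d → F,
      ((e.equivFun.symm c : W) : R) = ∑ a, algebraMap F R (c a) * ((e a : W) : R) := by
    intro c
    rw [Module.Basis.equivFun_symm_apply]
    push_cast
    simp [Algebra.smul_def]
  set L : List ℕ := Nat.digits q k with hL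
  set n := L.length with hn
  have frob : ∀ (x y : R) (i : ℕ), (x + y) ^ q ^ i = x ^ q ^ i + y ^ q ^ i := by
    intro x y i
    rw [hq, hcard, ← pow_mul]
    exact add_pow_char_pow ..
  have frobsum : ∀ (g : Fin d → R) (i : ℕ), (∑ a, g a) ^ q ^ i = ∑ a, (g a) ^ q ^ i := by
    intro g i
    rw [hq, hcard, ← pow_mul]
    exact sum_pow_char_pow ..
  set Sig : Finset ((_ : ℕ) × ℕ) := (Finset.range n).sigma (fun i => Finset.range (L.getD i 0))
    with hSig
  have key : ∀ c : Fin d → F,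
      (f + ((e.equivFun.symm c : W) : R)) ^ k
        = ∏ x ∈ Sig, (f ^ q ^ x.1 + ∑ a, algebraMap F R (c a) * ((e a : W) : R) ^ q ^ x.1) := by
    intro c
    rw [hSig, Finset.prod_sigma]
    have : ∀ i ∈ Finset.range n,
        ∏ _j ∈ Finset.range (L.getD i 0),
            (f ^ q ^ i + ∑ a, algebraMap F R (c a) * ((e a : W) : R) ^ q ^ i)
          = ((f + ((e.equivFun.symm c : W) : R)) ^ q ^ i) ^ L.getD i 0 := by
      intro i _
      rw [Finset.prod_const, Finset.card_range]
      congr 1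
      rw [hcoe c, frob, frobsum]
      congr 1
      refine Finset.sum_congr rfl fun a _ => ?_
      rw [mul_pow, ← map_pow, FiniteField.pow_card_pow]
    rw [Finset.prod_congr rfl this, ← pow_ofDigits_helper, Nat.ofDigits_digits]
  refine (Finset.sum_congr rfl fun c _ => key c).trans
    (helper_B d Sig ?_ (fun x => f ^ q ^ x.1) (fun x a => ((e a : W) : R) ^ q ^ x.1))
  rw [hSig, Finset.card_sigma]
  simp only [Finset.card_range]
  rw [sum_getD_helper]
  exact hk
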